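/- Let f ∈ ℤ_p[T] be a distinguished polynomial of degree d, i.e. f is monic of degree d and every coefficient of f other than the leading one is divisible by p. Then the quotient ℤ_p[[T]]/(f) of the power series ring is a free ℤ_p-module of rank d, with basis the images of 1, T, …, T^{d−1}. -/

import Mathlib

open PowerSeries Finset Filter

namespace WPrep

variable {p : ℕ} [hp : Fact p.Prime]

lemma summable_norm_aux (u : ℕ → ℤ_[p]) :
    Summable (fun n => ‖(p : ℤ_[p]) ^ n * u n‖) := by
  have hlt : (p : ℝ)⁻¹ < 1 := by
    rw [inv_lt_one_iff₀]; right; exact_mod_cast hp.out.one_lt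
  have hge : (0:ℝ) ≤ (p : ℝ)⁻¹ := by positivity
  refine Summable.of_nonneg_of_le (fun n => norm_nonneg _) (fun n => ?_)
    (summable_geometric_of_lt_one hge hlt)
  calc ‖(p : ℤ_[p]) ^ n * u n‖ = ‖(p : ℤ_[p])‖ ^ n * ‖u n‖ := by
        rw [norm_mul, norm_pow]
    _ ≤ ((p:ℝ)⁻¹) ^ n * 1 := by
        rw [PadicInt.norm_p]; gcongr; exact PadicInt.norm_le_one _
    _ = ((p:ℝ)⁻¹) ^ n := mul_one _

lemma summable_aux (u : ℕ → ℤ_[p]) : Summable (fun n => (p : ℤ_[p]) ^ n * u n) :=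
  (summable_norm_aux u).of_norm

lemma tendsto_aux (u : ℕ → ℤ_[p]) :
    Tendsto (fun n => (p : ℤ_[p]) ^ n * u n) atTop (nhds 0) := by
  have hlt : (p : ℝ)⁻¹ < 1 := by
    rw [inv_lt_one_iff₀]; right; exact_mod_cast hp.out.one_lt
  have hge : (0:ℝ) ≤ (p : ℝ)⁻¹ := by positivity
  refine squeeze_zero_norm (fun n => ?_)
    (tendsto_pow_atTop_nhds_zero_of_lt_one hge hlt)
  calc ‖(p : ℤ_[p]) ^ n * u n‖ = ‖(p : ℤ_[p])‖ ^ n * ‖u n‖ := by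
        rw [norm_mul, norm_pow]
    _ ≤ ((p:ℝ)⁻¹) ^ n * 1 := by
        rw [PadicInt.norm_p]; gcongr; exact PadicInt.norm_le_one _
    _ = ((p:ℝ)⁻¹) ^ n := mul_one _

variable (p) in
/-- the scalar `p` as a constant power series -/
noncomputable def Pc : PowerSeries ℤ_[p] := PowerSeries.C (p : ℤ_[p])

lemma coeff_Pc_pow_mul (n j : ℕ) (x : PowerSeries ℤ_[p]) :
    PowerSeries.coeff j (Pc p ^ n * x) = (p : ℤ_[p]) ^ n * PowerSeries.coeff j x := by
  rw [Pc, ← map_pow, PowerSeries.coeff_C_mul]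

variable (d : ℕ)

noncomputable def tailP (g : PowerSeries ℤ_[p]) : PowerSeries ℤ_[p] :=
  PowerSeries.mk fun i => PowerSeries.coeff (i + d) g

noncomputable def headP (g : PowerSeries ℤ_[p]) : PowerSeries ℤ_[p] :=
  PowerSeries.mk fun i => if i < d then PowerSeries.coeff i g else 0

lemma splitP (g : PowerSeries ℤ_[p]) : g = headP d g + tailP d g * X ^ d := by
  ext j
  rw [map_add, PowerSeries.coeff_mul_X_pow']
  simp only [headP, tailP, coeff_mk]
  by_cases h : j < d
  · rw [if_pos h, if_neg (by omega)]
    ring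
  · rw [if_neg h, if_pos (by omega)]
    rw [Nat.sub_add_cancel (by omega)]
    ring

noncomputable def G (B : PowerSeries ℤ_[p]) (g : PowerSeries ℤ_[p]) : ℕ → PowerSeries ℤ_[p]
  | 0 => g
  | n + 1 => -(B * tailP d (G B g n))

lemma stepP (B g : PowerSeries ℤ_[p]) (n : ℕ) :
    G d B g n = tailP d (G d B g n) * (X ^ d + Pc p * B)
      + headP d (G d B g n) + Pc p * G d B g (n + 1) := by
  have h : G d B g (n+1) = -(B * tailP d (G d B g n)) := rfl
  rw [h]
  have h2 := splitP d (G d B g n)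
  conv_lhs => rw [h2]
  ring

lemma keyP (B g : PowerSeries ℤ_[p]) (N : ℕ) :
    g = (∑ n ∈ range N, Pc p ^ n * tailP d (G d B g n)) * (X ^ d + Pc p * B)
      + (∑ n ∈ range N, Pc p ^ n * headP d (G d B g n)) + Pc p ^ N * G d B g N := by
  induction N with
  | zero => simp [G]
  | succ N ih =>
    rw [sum_range_succ, sum_range_succ]
    conv_lhs => rw [ih, stepP d B g N]
    ring

lemma keyC (B g : PowerSeries ℤ_[p]) (N j : ℕ) :
    PowerSeries.coeff j g
      = (∑ n ∈ range N, (p:ℤ_[p]) ^ n * PowerSeries.coeff j (tailP d (G d B g n) * (X ^ d + Pc p * B)))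
      + (∑ n ∈ range N, (p:ℤ_[p]) ^ n * PowerSeries.coeff j (headP d (G d B g n)))
      + (p:ℤ_[p]) ^ N * PowerSeries.coeff j (G d B g N) := by
  conv_lhs => rw [keyP d B g N]
  rw [map_add, map_add, Finset.sum_mul, map_sum, map_sum, coeff_Pc_pow_mul]
  congr 2
  · refine Finset.sum_congr rfl fun n _ => ?_
    rw [mul_assoc, coeff_Pc_pow_mul]
  · exact Finset.sum_congr rfl fun n _ => coeff_Pc_pow_mul n j _

lemma hasSum_div (B g : PowerSeries ℤ_[p]) (j : ℕ) :
    HasSum (fun n => (p:ℤ_[p]) ^ n *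
        (PowerSeries.coeff j (tailP d (G d B g n) * (X ^ d + Pc p * B))
          + PowerSeries.coeff j (headP d (G d B g n))))
      (PowerSeries.coeff j g) := by
  rw [hasSum_iff_tendsto_nat_of_summable_norm (summable_norm_aux _)]
  have heq : ∀ N, (∑ n ∈ range N, (p:ℤ_[p]) ^ n *
      (PowerSeries.coeff j (tailP d (G d B g n) * (X ^ d + Pc p * B))
        + PowerSeries.coeff j (headP d (G d B g n))))
      = PowerSeries.coeff j g - (p:ℤ_[p]) ^ N * PowerSeries.coeff j (G d B g N) := by
    intro N
    rw [keyC d B g N j]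
    have h4 : ∀ n ∈ range N, (p:ℤ_[p]) ^ n *
        (PowerSeries.coeff j (tailP d (G d B g n) * (X ^ d + Pc p * B))
          + PowerSeries.coeff j (headP d (G d B g n)))
        = (p:ℤ_[p]) ^ n * PowerSeries.coeff j (tailP d (G d B g n) * (X ^ d + Pc p * B))
          + (p:ℤ_[p]) ^ n * PowerSeries.coeff j (headP d (G d B g n)) := fun n _ => by ring
    rw [Finset.sum_congr rfl h4, Finset.sum_add_distrib]
    ring
  simp only [heq]
  have h0 := tendsto_aux (fun N => PowerSeries.coeff j (G d B g N))
  have := Tendsto.sub (tendsto_const_nhds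
    (x := PowerSeries.coeff j g) (f := atTop)) h0
  simpa using this

lemma division (B g : PowerSeries ℤ_[p]) :
    ∃ Q R' : PowerSeries ℤ_[p], (∀ j, d ≤ j → PowerSeries.coeff j R' = 0) ∧
      g = Q * (X ^ d + Pc p * B) + R' := by
  classical
  set F : PowerSeries ℤ_[p] := X ^ d + Pc p * B with hF
  refine ⟨PowerSeries.mk (fun a => ∑' n, (p:ℤ_[p]) ^ n * PowerSeries.coeff a (tailP d (G d B g n))),
    PowerSeries.mk (fun a => ∑' n, (p:ℤ_[p]) ^ n * PowerSeries.coeff a (headP d (G d B g n))), ?_, ?_⟩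
  · intro j hj
    rw [coeff_mk]
    convert tsum_zero with n
    simp [headP, Nat.not_lt.mpr hj]
  · ext j
    rw [map_add, PowerSeries.coeff_mul, coeff_mk]
    have h1 : ∀ x : ℕ × ℕ, x ∈ antidiagonal j →
        PowerSeries.coeff x.1 (PowerSeries.mk (fun a => ∑' n, (p:ℤ_[p]) ^ n * PowerSeries.coeff a (tailP d (G d B g n)))) * PowerSeries.coeff x.2 F
        = ∑' n, (p:ℤ_[p]) ^ n * (PowerSeries.coeff x.1 (tailP d (G d B g n)) * PowerSeries.coeff x.2 F) := by
      intro x _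
      rw [coeff_mk, ← Summable.tsum_mul_right _ (summable_aux _)]
      exact tsum_congr fun n => by ring
    rw [Finset.sum_congr rfl h1, ← Summable.tsum_finsetSum (fun x _ => summable_aux _)]
    have h2 : ∀ n : ℕ, (∑ x ∈ antidiagonal j,
        (p:ℤ_[p]) ^ n * (PowerSeries.coeff x.1 (tailP d (G d B g n)) * PowerSeries.coeff x.2 F))
        = (p:ℤ_[p]) ^ n * PowerSeries.coeff j (tailP d (G d B g n) * F) := by
      intro n
      rw [PowerSeries.coeff_mul, Finset.mul_sum]
    rw [tsum_congr h2, ← Summable.tsum_add (summable_aux _) (summable_aux _)]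
    have h3 : ∀ n : ℕ, ((p:ℤ_[p]) ^ n * PowerSeries.coeff j (tailP d (G d B g n) * F)
        + (p:ℤ_[p]) ^ n * PowerSeries.coeff j (headP d (G d B g n)))
        = (p:ℤ_[p]) ^ n * (PowerSeries.coeff j (tailP d (G d B g n) * F)
            + PowerSeries.coeff j (headP d (G d B g n))) := fun n => by ring
    rw [tsum_congr h3]
    exact ((hasSum_div d B g j).tsum_eq).symm


lemma pdvd (F : PowerSeries ℤ_[p]) (hFd : PowerSeries.coeff d F = 1)
    (hgt : ∀ j, d < j → PowerSeries.coeff j F = 0)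
    (hlt : ∀ j, j < d → (p : ℤ_[p]) ∣ PowerSeries.coeff j F)
    (Q : PowerSeries ℤ_[p]) (h : ∀ j, d ≤ j → PowerSeries.coeff j (Q * F) = 0)
    (a : ℕ) : (p : ℤ_[p]) ∣ PowerSeries.coeff a Q := by
  classical
  have h0 := h (d + a) (Nat.le_add_right d a)
  rw [PowerSeries.coeff_mul] at h0
  have hmem : ((a, d) : ℕ × ℕ) ∈ antidiagonal (d + a) := by
    rw [Finset.HasAntidiagonal.mem_antidiagonal]; omega
  rw [← Finset.add_sum_erase _ _ hmem] at h0
  have hdvd : (p : ℤ_[p]) ∣ ∑ x ∈ (antidiagonal (d + a)).erase (a, d),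
      PowerSeries.coeff x.1 Q * PowerSeries.coeff x.2 F := by
    refine Finset.dvd_sum fun x hx => ?_
    obtain ⟨hne, hx2⟩ := Finset.mem_erase.mp hx
    have hsum := Finset.HasAntidiagonal.mem_antidiagonal.mp hx2
    rcases lt_trichotomy x.2 d with h1 | h2 | h3
    · exact Dvd.dvd.mul_left (hlt x.2 h1) _
    · exfalso
      apply hne
      have : x.1 = a := by omega
      exact Prod.ext this h2
    · rw [hgt x.2 h3, mul_zero]
      exact dvd_zero _
  have heq : PowerSeries.coeff a Q
      = -(∑ x ∈ (antidiagonal (d + a)).erase (a, d),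
          PowerSeries.coeff x.1 Q * PowerSeries.coeff x.2 F) := by
    rw [hFd, mul_one] at h0
    exact eq_neg_of_add_eq_zero_left h0
  rw [heq]
  exact hdvd.neg_right

lemma qzero (F : PowerSeries ℤ_[p]) (hFd : PowerSeries.coeff d F = 1)
    (hgt : ∀ j, d < j → PowerSeries.coeff j F = 0)
    (hlt : ∀ j, j < d → (p : ℤ_[p]) ∣ PowerSeries.coeff j F)
    (Q : PowerSeries ℤ_[p]) (h : ∀ j, d ≤ j → PowerSeries.coeff j (Q * F) = 0) :
    Q = 0 := by
  classical
  have hp0 : (p : ℤ_[p]) ≠ 0 := Nat.cast_ne_zero.mpr hp.out.pos.ne'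
  have main : ∀ n : ℕ, ∀ Q : PowerSeries ℤ_[p],
      (∀ j, d ≤ j → PowerSeries.coeff j (Q * F) = 0) →
      ∀ a, (p : ℤ_[p]) ^ n ∣ PowerSeries.coeff a Q := by
    intro n
    induction n with
    | zero => intro Q _ a; simp
    | succ n ih =>
      intro Q hQ a
      have hd := fun b => pdvd d F hFd hgt hlt Q hQ b
      set Q' : PowerSeries ℤ_[p] := PowerSeries.mk fun b => (hd b).choose with hQ'
      have hQeq : ∀ b, PowerSeries.coeff b Q = (p : ℤ_[p]) * PowerSeries.coeff b Q' := by
        intro b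
        rw [hQ', coeff_mk]
        exact (hd b).choose_spec
      have hQmul : Q = PowerSeries.C (p : ℤ_[p]) * Q' := by
        ext b
        rw [PowerSeries.coeff_C_mul]
        exact hQeq b
      have hQ'h : ∀ j, d ≤ j → PowerSeries.coeff j (Q' * F) = 0 := by
        intro j hj
        have h1 := hQ j hj
        rw [hQmul, mul_assoc, PowerSeries.coeff_C_mul] at h1
        exact (mul_eq_zero.mp h1).resolve_left hp0
      obtain ⟨c, hc⟩ := ih Q' hQ'h a
      exact ⟨c, by rw [hQeq a, hc, pow_succ]; ring⟩
  ext a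
  rw [map_zero]
  have hb : ∀ n : ℕ, ‖PowerSeries.coeff a Q‖ ≤ ((p:ℝ)⁻¹) ^ n := by
    intro n
    obtain ⟨c, hc⟩ := main n Q h a
    rw [hc, norm_mul, norm_pow, PadicInt.norm_p]
    calc ((p:ℝ)⁻¹) ^ n * ‖c‖ ≤ ((p:ℝ)⁻¹) ^ n * 1 := by
          have := PadicInt.norm_le_one c
          have h2 : (0:ℝ) ≤ ((p:ℝ)⁻¹) ^ n := by positivity
          nlinarith [norm_nonneg c]
      _ = ((p:ℝ)⁻¹) ^ n := mul_one _
  have hlt1 : (p : ℝ)⁻¹ < 1 := by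
    rw [inv_lt_one_iff₀]; right; exact_mod_cast hp.out.one_lt
  have h0 : ‖PowerSeries.coeff a Q‖ ≤ 0 :=
    ge_of_tendsto' (tendsto_pow_atTop_nhds_zero_of_lt_one (by positivity) hlt1) hb
  rw [← norm_le_zero_iff]
  exact h0


variable (p) in
noncomputable def psiD (d : ℕ) : (Fin d → ℤ_[p]) →ₗ[ℤ_[p]] PowerSeries ℤ_[p] :=
  { toFun := fun c => ∑ i : Fin d, PowerSeries.C (c i) * X ^ (i : ℕ)
    map_add' := by
      intro a b
      simp only [Pi.add_apply, map_add, add_mul]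
      rw [Finset.sum_add_distrib]
    map_smul' := by
      intro r a
      simp only [Pi.smul_apply, smul_eq_mul, map_mul, RingHom.id_apply]
      rw [Finset.smul_sum]
      refine Finset.sum_congr rfl fun i _ => ?_
      rw [PowerSeries.smul_eq_C_mul]
      ring }

lemma coeff_psiD (d : ℕ) (c : Fin d → ℤ_[p]) (j : ℕ) :
    PowerSeries.coeff j (psiD p d c) = if h : j < d then c ⟨j, h⟩ else 0 := by
  rw [psiD]
  simp only [LinearMap.coe_mk, AddHom.coe_mk, map_sum, PowerSeries.coeff_C_mul,
    PowerSeries.coeff_X_pow]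
  by_cases h : j < d
  · rw [dif_pos h, Finset.sum_eq_single (⟨j, h⟩ : Fin d)]
    · rw [if_pos rfl, mul_one]
    · intro b _ hb
      rw [if_neg, mul_zero]
      intro hjb
      exact hb (by ext; simp [← hjb])
    · intro habs
      exact absurd (Finset.mem_univ _) habs
  · rw [dif_neg h]
    refine Finset.sum_eq_zero fun b _ => ?_
    rw [if_neg (by omega), mul_zero]

end WPrep

set_option maxHeartbeats 1000000 in
open WPrep PowerSeries Finset in
/-- Weierstrass: if f ∈ ℤ_p[T] is a distinguished polynomial of degree d (monic, all
lower coefficients divisible by p), then ℤ_p[[T]]/(f) is free of rank d over ℤ_p with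
basis the images of 1, T, …, T^{d-1}. -/
theorem padic_powerSeries_quotient_distinguished_free (p : ℕ) [Fact p.Prime]
    (f : Polynomial ℤ_[p]) (d : ℕ) (hmonic : f.Monic) (hdeg : f.natDegree = d)
    (hdist : ∀ i < d, (p : ℤ_[p]) ∣ f.coeff i) :
    ∃ b : Module.Basis (Fin d) ℤ_[p]
        (PowerSeries ℤ_[p] ⧸ Ideal.span ({(f : PowerSeries ℤ_[p])} : Set (PowerSeries ℤ_[p]))),
      ∀ i : Fin d, b i = Ideal.Quotient.mk _ (PowerSeries.X ^ (i : ℕ)) := by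
  classical
  set F : PowerSeries ℤ_[p] := (f : PowerSeries ℤ_[p]) with hF
  have hFd : PowerSeries.coeff d F = 1 := by
    rw [hF, Polynomial.coeff_coe, ← hdeg]
    exact hmonic.coeff_natDegree
  have hgt : ∀ j, d < j → PowerSeries.coeff j F = 0 := by
    intro j hj
    rw [hF, Polynomial.coeff_coe]
    exact Polynomial.coeff_eq_zero_of_natDegree_lt (by omega)
  have hltF : ∀ j, j < d → (p : ℤ_[p]) ∣ PowerSeries.coeff j F := by
    intro j hj
    rw [hF, Polynomial.coeff_coe]
    exact hdist j hj
  -- B such that F = X^d + Pc * B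
  set B : PowerSeries ℤ_[p] :=
    PowerSeries.mk (fun i => if h : i < d then (hdist i h).choose else 0) with hB
  have hFB : F = X ^ d + Pc p * B := by
    ext j
    rw [map_add, PowerSeries.coeff_X_pow, Pc, PowerSeries.coeff_C_mul, hB, coeff_mk]
    rcases lt_trichotomy j d with h1 | h2 | h3
    · rw [if_neg (by omega), dif_pos h1, hF, Polynomial.coeff_coe, zero_add]
      exact (hdist j h1).choose_spec
    · subst h2
      rw [if_pos rfl, dif_neg (lt_irrefl j), hFd, mul_zero, add_zero]
    · rw [if_neg (by omega), dif_neg (by omega), hgt j h3, mul_zero, add_zero]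
  set I : Ideal (PowerSeries ℤ_[p]) := Ideal.span {F} with hI
  -- the linear map
  have hψ : ∀ (c : Fin d → ℤ_[p]) (j : ℕ),
      PowerSeries.coeff j (psiD p d c) = if h : j < d then c ⟨j, h⟩ else 0 :=
    coeff_psiD d
  set ψ : (Fin d → ℤ_[p]) →ₗ[ℤ_[p]] PowerSeries ℤ_[p] := psiD p d with hψdef
  set φ : (Fin d → ℤ_[p]) →ₗ[ℤ_[p]]
      (PowerSeries ℤ_[p] ⧸ I) :=
    (Ideal.Quotient.mkₐ ℤ_[p] I).toLinearMap.comp ψ with hφdef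
  have hφ : ∀ c, φ c = Ideal.Quotient.mk I (ψ c) := fun c => rfl
  -- injectivity
  have hinj : Function.Injective φ := by
    rw [← LinearMap.ker_eq_bot, LinearMap.ker_eq_bot']
    intro c hc
    rw [hφ] at hc
    have hmem : ψ c ∈ I := (Ideal.Quotient.eq_zero_iff_mem).mp hc
    obtain ⟨Q, hQ⟩ := (Ideal.mem_span_singleton).mp hmem
    have hQz : Q = 0 := by
      refine qzero d F hFd hgt hltF Q fun j hj => ?_
      rw [mul_comm, ← hQ, hψ c j, dif_neg (by omega)]
    have hψ0 : ψ c = 0 := by rw [hQ, hQz, mul_zero]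
    funext i
    have := hψ c i
    rw [hψ0, map_zero] at this
    rw [dif_pos i.isLt] at this
    simpa using this.symm
  -- surjectivity
  have hsurj : Function.Surjective φ := by
    intro x
    obtain ⟨g, hg⟩ := Ideal.Quotient.mk_surjective (I := I) x
    obtain ⟨Q, R', hR', hgeq⟩ := division d B g
    refine ⟨fun i => PowerSeries.coeff i R', ?_⟩
    have hψR : ψ (fun i => PowerSeries.coeff (i : ℕ) R') = R' := by
      ext j
      rw [hψ]
      by_cases h : j < d
      · rw [dif_pos h]
      · rw [dif_neg h, hR' j (by omega)]
    rw [hφ, hψR, ← hg]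
    rw [Ideal.Quotient.eq]
    rw [hI, Ideal.mem_span_singleton]
    refine ⟨-Q, ?_⟩
    rw [← hFB] at hgeq
    rw [hgeq]
    ring
  set e : (Fin d → ℤ_[p]) ≃ₗ[ℤ_[p]] (PowerSeries ℤ_[p] ⧸ I) :=
    LinearEquiv.ofBijective φ ⟨hinj, hsurj⟩ with he
  refine ⟨Module.Basis.ofEquivFun e.symm, fun i => ?_⟩
  rw [Module.Basis.coe_ofEquivFun]
  simp only [LinearEquiv.symm_symm]
  have h1 : e (Pi.single i 1) = Ideal.Quotient.mk I (ψ (Pi.single i 1)) := rfl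
  rw [h1]
  congr 1
  ext j
  rw [hψ, PowerSeries.coeff_X_pow]
  by_cases h : j < d
  · rw [dif_pos h]
    by_cases hji : (⟨j, h⟩ : Fin d) = i
    · rw [hji, Pi.single_eq_same, if_pos]
      rw [← hji]
    · rw [Pi.single_eq_of_ne hji, if_neg]
      intro hc
      exact hji (by ext; simp [hc])
  · rw [dif_neg h, if_neg (by omega)]
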